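/- Translation principle, part 2: Let f : C → D be a morphism of Banach chain complexes with dual f' : D' → C'. If H^*(f') : H^*(D') → H^*(C') is an isometric isomorphism in every degree (with respect to the induced semi-norms), then H_*(f) : H_*(C) → H_*(D) is an isometric isomorphism in every degree. -/

import Mathlib

open Metric Filter Topology

set_option maxHeartbeats 1000000
set_option synthInstance.maxHeartbeats 400000

/-! ### Generic Hahn–Banach helpers -/

/-- A functional of norm at most one vanishing on a submodule and realizing the distance
of `x` to the submodule. -/
lemma exists_functional {X : Type*} [NormedAddCommGroup X] [NormedSpace ℝ X]
    (S : Submodule ℝ X) (x : X) :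
    ∃ Φ : X →L[ℝ] ℝ, ‖Φ‖ ≤ 1 ∧ (∀ s ∈ S, Φ s = 0) ∧ Φ x = infDist x (S : Set X) := by
  classical
  let T := S.topologicalClosure
  haveI : IsClosed (T : Set X) := S.isClosed_topologicalClosure
  obtain ⟨g, hg1, hg2⟩ := exists_dual_vector'' ℝ (Submodule.Quotient.mk x : X ⧸ T)
  let mkC : X →L[ℝ] (X ⧸ T) :=
    LinearMap.mkContinuous T.mkQ 1 (fun m => by
      simpa using Submodule.Quotient.norm_mk_le T m)
  refine ⟨g.comp mkC, ?_, ?_, ?_⟩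
  · refine ContinuousLinearMap.opNorm_le_bound _ zero_le_one (fun y => ?_)
    calc ‖g (mkC y)‖ ≤ ‖g‖ * ‖mkC y‖ := g.le_opNorm _
    _ ≤ 1 * ‖y‖ := by
        apply mul_le_mul hg1 (by simpa [mkC] using Submodule.Quotient.norm_mk_le T y)
          (norm_nonneg _) zero_le_one
  · intro s hs
    have : (Submodule.Quotient.mk s : X ⧸ T) = 0 := by
      rw [Submodule.Quotient.mk_eq_zero]
      exact Submodule.le_topologicalClosure S hs
    simp only [ContinuousLinearMap.comp_apply]
    rw [show mkC s = Submodule.Quotient.mk s from rfl, this, map_zero]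
  · have h1 : ‖(Submodule.Quotient.mk x : X ⧸ T)‖ = infDist x (T : Set X) := by
      exact QuotientAddGroup.norm_mk x
    have h2 : (T : Set X) = closure (S : Set X) := rfl
    simp only [ContinuousLinearMap.comp_apply]
    rw [show mkC x = Submodule.Quotient.mk x from rfl, hg2, h1, h2, infDist_closure]
    rfl

lemma le_infDist' {X : Type*} [PseudoMetricSpace X] {s : Set X} {x : X} {c : ℝ}
    (hs : s.Nonempty) (h : ∀ y ∈ s, c ≤ dist x y) : c ≤ infDist x s := by
  by_contra hc
  push_neg at hc
  obtain ⟨y, hy, hd⟩ := (infDist_lt_iff hs).1 hc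
  exact absurd (h y hy) (by linarith)

/-- Cycles of a chain complex indexed over ℕ. -/
def IsCycle (C : ℕ → Type*) [∀ n, NormedAddCommGroup (C n)] [∀ n, NormedSpace ℝ (C n)]
    (d : ∀ n, C (n + 1) →L[ℝ] C n) : ∀ n, C n → Prop
  | 0, _ => True
  | (n + 1), x => d n x = 0

/-- Coboundaries of the dual cochain complex. -/
def IsCobdry (C : ℕ → Type*) [∀ n, NormedAddCommGroup (C n)] [∀ n, NormedSpace ℝ (C n)]
    (d : ∀ n, C (n + 1) →L[ℝ] C n) : ∀ n, (C n →L[ℝ] ℝ) → Prop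
  | 0, f => f = 0
  | (n + 1), f => ∃ g : C n →L[ℝ] ℝ, f = g.comp (d n)

/-- The seminorm of the homology class of a cycle `x` in degree `n`:
the infimum of the norms of the representing cycles `x - ∂ b`. -/
noncomputable def hSeminorm (C : ℕ → Type*) [∀ n, NormedAddCommGroup (C n)]
    [∀ n, NormedSpace ℝ (C n)] (d : ∀ n, C (n + 1) →L[ℝ] C n) (n : ℕ) (x : C n) : ℝ :=
  sInf {r : ℝ | ∃ b : C (n + 1), r = ‖x - d n b‖}

/-- The seminorm of the cohomology class of a cocycle `φ` in degree `n` of the dual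
complex: the infimum of the operator norms of the representing cocycles. -/
noncomputable def cSeminorm (C : ℕ → Type*) [∀ n, NormedAddCommGroup (C n)]
    [∀ n, NormedSpace ℝ (C n)] (d : ∀ n, C (n + 1) →L[ℝ] C n) (n : ℕ)
    (φ : C n →L[ℝ] ℝ) : ℝ :=
  sInf {r : ℝ | ∃ g : C n →L[ℝ] ℝ, IsCobdry C d n g ∧ r = ‖φ - g‖}

/-! ### Basic helpers about `IsCycle`, `IsCobdry` and the two seminorms -/

section chainHelpers

variable {C : ℕ → Type*} [∀ n, NormedAddCommGroup (C n)] [∀ n, NormedSpace ℝ (C n)]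
  {d : ∀ n, C (n + 1) →L[ℝ] C n}

lemma isCobdry_zero (n : ℕ) : IsCobdry C d n 0 := by
  cases n with
  | zero => rfl
  | succ m => exact ⟨0, by ext x; simp⟩

lemma IsCobdry.add {n : ℕ} {g₁ g₂ : C n →L[ℝ] ℝ} (h₁ : IsCobdry C d n g₁)
    (h₂ : IsCobdry C d n g₂) : IsCobdry C d n (g₁ + g₂) := by
  cases n with
  | zero =>
    have e₁ : g₁ = 0 := h₁
    have e₂ : g₂ = 0 := h₂
    show g₁ + g₂ = 0
    rw [e₁, e₂, add_zero]
  | succ m =>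
    obtain ⟨a, ha⟩ := h₁
    obtain ⟨b, hb⟩ := h₂
    exact ⟨a + b, by rw [ha, hb]; ext x; simp⟩

lemma IsCobdry.sub {n : ℕ} {g₁ g₂ : C n →L[ℝ] ℝ} (h₁ : IsCobdry C d n g₁)
    (h₂ : IsCobdry C d n g₂) : IsCobdry C d n (g₁ - g₂) := by
  cases n with
  | zero =>
    have e₁ : g₁ = 0 := h₁
    have e₂ : g₂ = 0 := h₂
    show g₁ - g₂ = 0
    rw [e₁, e₂, sub_zero]
  | succ m =>
    obtain ⟨a, ha⟩ := h₁
    obtain ⟨b, hb⟩ := h₂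
    exact ⟨a - b, by rw [ha, hb]; ext x; simp⟩

lemma cobdry_apply_cycle {n : ℕ} {g : C n →L[ℝ] ℝ} {x : C n}
    (hg : IsCobdry C d n g) (hx : IsCycle C d n x) : g x = 0 := by
  cases n with
  | zero =>
    have : g = 0 := hg
    rw [this]; rfl
  | succ m =>
    obtain ⟨a, ha⟩ := hg
    have hx' : d m x = 0 := hx
    rw [ha]
    show a (d m x) = 0
    rw [hx', map_zero]

lemma cobdry_cocycle (hd : ∀ k y, d k (d (k + 1) y) = 0) {n : ℕ} {g : C n →L[ℝ] ℝ}
    (hg : IsCobdry C d n g) : g.comp (d n) = 0 := by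
  cases n with
  | zero =>
    have : g = 0 := hg
    rw [this]; ext x; simp
  | succ m =>
    obtain ⟨a, ha⟩ := hg
    rw [ha]
    ext y
    show a (d m (d (m + 1) y)) = 0
    rw [hd m y, map_zero]

lemma hSeminorm_eq (n : ℕ) (x : C n) :
    hSeminorm C d n x = infDist x (Set.range (d n)) := by
  have hne : {r : ℝ | ∃ b : C (n + 1), r = ‖x - d n b‖}.Nonempty := ⟨‖x - d n 0‖, 0, rfl⟩
  have hbdd : BddBelow {r : ℝ | ∃ b : C (n + 1), r = ‖x - d n b‖} := by
    refine ⟨0, ?_⟩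
    rintro r ⟨b, rfl⟩
    exact norm_nonneg _
  apply le_antisymm
  · apply le_infDist' (⟨d n 0, 0, rfl⟩ : (Set.range (d n)).Nonempty)
    rintro y ⟨b, rfl⟩
    exact csInf_le hbdd ⟨b, by rw [dist_eq_norm]⟩
  · apply le_csInf hne
    rintro r ⟨b, rfl⟩
    rw [← dist_eq_norm]
    exact infDist_le_dist_of_mem ⟨b, rfl⟩

lemma cSeminorm_set_nonempty {n : ℕ} (φ : C n →L[ℝ] ℝ) :
    {r : ℝ | ∃ g : C n →L[ℝ] ℝ, IsCobdry C d n g ∧ r = ‖φ - g‖}.Nonempty :=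
  ⟨‖φ - 0‖, 0, isCobdry_zero n, rfl⟩

lemma cSeminorm_le_norm {n : ℕ} (φ : C n →L[ℝ] ℝ) : cSeminorm C d n φ ≤ ‖φ‖ := by
  have hbdd : BddBelow {r : ℝ | ∃ g : C n →L[ℝ] ℝ, IsCobdry C d n g ∧ r = ‖φ - g‖} := by
    refine ⟨0, ?_⟩
    rintro r ⟨g, hg, rfl⟩
    exact norm_nonneg _
  have : ‖φ‖ ∈ {r : ℝ | ∃ g : C n →L[ℝ] ℝ, IsCobdry C d n g ∧ r = ‖φ - g‖} :=
    ⟨0, isCobdry_zero n, by rw [sub_zero]⟩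
  exact csInf_le hbdd this

lemma cSeminorm_sub_cobdry {n : ℕ} {φ c : C n →L[ℝ] ℝ} (hc : IsCobdry C d n c) :
    cSeminorm C d n (φ - c) = cSeminorm C d n φ := by
  unfold cSeminorm
  congr 1
  ext r
  constructor
  · rintro ⟨g, hg, rfl⟩
    exact ⟨g + c, hg.add hc, by congr 1; abel⟩
  · rintro ⟨g, hg, rfl⟩
    exact ⟨g - c, hg.sub hc, by congr 1; abel⟩

lemma exists_cobdry_rep {n : ℕ} {φ : C n →L[ℝ] ℝ} (h : cSeminorm C d n φ ≤ 1)
    {ε : ℝ} (hε : 0 < ε) : ∃ g, IsCobdry C d n g ∧ ‖φ - g‖ < 1 + ε := by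
  have hlt : sInf {r : ℝ | ∃ g : C n →L[ℝ] ℝ, IsCobdry C d n g ∧ r = ‖φ - g‖} < 1 + ε :=
    lt_of_le_of_lt h (by linarith)
  obtain ⟨r, ⟨g, hg, rfl⟩, hr⟩ := exists_lt_of_csInf_lt (cSeminorm_set_nonempty φ) hlt
  exact ⟨g, hg, hr⟩

end chainHelpers

/-! ### The core analytic lemma: a Banach chain complex whose dual complex has vanishing
cohomology in all degrees has vanishing homology in all degrees. -/

theorem lemA (E : ℕ → Type*) [∀ n, NormedAddCommGroup (E n)] [∀ n, NormedSpace ℝ (E n)]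
    [∀ n, CompleteSpace (E n)] (e : ∀ n, E (n + 1) →L[ℝ] E n)
    (he : ∀ n x, e n (e (n + 1) x) = 0)
    (hvan : ∀ n (Φ : E n →L[ℝ] ℝ), Φ.comp (e n) = 0 → IsCobdry E e n Φ) :
    ∀ n z, IsCycle E e n z → ∃ w, e n w = z := by
  intro n z hz
  have hker_ne : ((LinearMap.ker (e n : E (n + 1) →ₗ[ℝ] E n) : Submodule ℝ (E (n + 1))) : Set (E (n + 1))).Nonempty :=
    ⟨0, by simp⟩
  have hrange_ne : (Set.range (e n)).Nonempty := ⟨e n 0, 0, rfl⟩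
  have hrr : ((LinearMap.range (e n : E (n + 1) →ₗ[ℝ] E n) : Submodule ℝ (E n)) : Set (E n)) = Set.range (e n) := by
    ext w
    simp [LinearMap.mem_range]
  -- Step 1: every cycle lies in the closure of the boundaries.
  have hz_cl : z ∈ closure (Set.range (e n)) := by
    by_contra hcl
    obtain ⟨Φ, hΦ1, hΦ2, hΦ3⟩ := exists_functional (LinearMap.range (e n : E (n + 1) →ₗ[ℝ] E n)) z
    have hΦco : Φ.comp (e n) = 0 := by
      ext w
      exact hΦ2 _ (LinearMap.mem_range_self _ w)
    have hΦz : Φ z ≠ 0 := by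
      rw [hΦ3, hrr]
      intro h0
      exact hcl ((mem_closure_iff_infDist_zero hrange_ne).2 h0)
    have hcob := hvan n Φ hΦco
    cases n with
    | zero =>
      exact hΦz (by rw [show Φ = 0 from hcob]; rfl)
    | succ m =>
      obtain ⟨γ, hγ⟩ := hcob
      have hz' : e m z = 0 := hz
      apply hΦz
      rw [hγ]
      show γ (e m z) = 0
      rw [hz', map_zero]
  -- Step 2: the open mapping theorem on the dual gives a uniform boundary condition.
  let P : (E n →L[ℝ] ℝ) →L[ℝ] (E (n + 1) →L[ℝ] ℝ) :=
    (ContinuousLinearMap.compL ℝ (E (n + 1)) (E n) ℝ).flip (e n)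
  let P' : (E (n + 1) →L[ℝ] ℝ) →L[ℝ] (E (n + 2) →L[ℝ] ℝ) :=
    (ContinuousLinearMap.compL ℝ (E (n + 2)) (E (n + 1)) ℝ).flip (e (n + 1))
  have hP : ∀ γ, P γ = γ.comp (e n) := fun _ => rfl
  have hP' : ∀ Φ, P' Φ = Φ.comp (e (n + 1)) := fun _ => rfl
  let V : Submodule ℝ (E (n + 1) →L[ℝ] ℝ) := LinearMap.ker (P' : (E (n + 1) →L[ℝ] ℝ) →ₗ[ℝ] (E (n + 2) →L[ℝ] ℝ))
  have hVc : IsClosed (V : Set (E (n + 1) →L[ℝ] ℝ)) := ContinuousLinearMap.isClosed_ker P'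
  haveI : CompleteSpace V := hVc.completeSpace_coe
  have hPV : ∀ γ, P γ ∈ V := by
    intro γ
    show P' (P γ) = 0
    rw [hP, hP']
    ext w
    show γ (e n (e (n + 1) w)) = 0
    rw [he n w, map_zero]
  let Pc : (E n →L[ℝ] ℝ) →L[ℝ] V := P.codRestrict V hPV
  have hsurjPc : Function.Surjective Pc := by
    rintro ⟨Φ, hΦ⟩
    have hco : Φ.comp (e (n + 1)) = 0 := by rw [← hP']; exact hΦ
    obtain ⟨γ, hγ⟩ := hvan (n + 1) Φ hco
    exact ⟨γ, Subtype.ext (by rw [show ((Pc γ : V) : E (n + 1) →L[ℝ] ℝ) = γ.comp (e n) from rfl,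
      ← hγ])⟩
  obtain ⟨K, hKpos, hK⟩ := ContinuousLinearMap.exists_preimage_norm_le (𝕜 := ℝ) (𝕜' := ℝ)
    (σ := RingHom.id ℝ) (E := E n →L[ℝ] ℝ) (F := V) ⟨Pc.toLinearMap, by exact Pc.continuous⟩
    (fun y => hsurjPc y)
  have ubc : ∀ w₀ : E (n + 1),
      infDist w₀ ((LinearMap.ker (e n : E (n + 1) →ₗ[ℝ] E n) : Submodule ℝ (E (n + 1))) : Set (E (n + 1)))
        ≤ K * ‖e n w₀‖ := by
    intro w₀
    obtain ⟨Φ, h1, h2, h3⟩ := exists_functional (LinearMap.ker (e n : E (n + 1) →ₗ[ℝ] E n)) w₀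
    have hΦV : Φ ∈ V := by
      show P' Φ = 0
      rw [hP']
      ext w
      exact h2 _ (by simp [LinearMap.mem_ker, he])
    obtain ⟨γ, hγ1, hγ2⟩ := hK ⟨Φ, hΦV⟩
    have hγP : γ.comp (e n) = Φ := by
      rw [← hP]
      exact congrArg Subtype.val hγ1
    have hγn : ‖γ‖ ≤ K := by
      calc ‖γ‖ ≤ K * ‖(⟨Φ, hΦV⟩ : V)‖ := hγ2
        _ = K * ‖Φ‖ := rfl
        _ ≤ K * 1 := mul_le_mul_of_nonneg_left h1 hKpos.le
        _ = K := mul_one K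
    calc infDist w₀ ((LinearMap.ker (e n : E (n + 1) →ₗ[ℝ] E n) : Submodule ℝ (E (n + 1))) : Set (E (n + 1)))
        = Φ w₀ := h3.symm
      _ = γ (e n w₀) := by rw [← hγP]; rfl
      _ ≤ ‖γ (e n w₀)‖ := by rw [Real.norm_eq_abs]; exact le_abs_self _
      _ ≤ ‖γ‖ * ‖e n w₀‖ := γ.le_opNorm _
      _ ≤ K * ‖e n w₀‖ := mul_le_mul_of_nonneg_right hγn (norm_nonneg _)
  have ubc' : ∀ y ∈ Set.range (e n), ∀ ε : ℝ, 0 < ε →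
      ∃ u, e n u = y ∧ ‖u‖ ≤ K * ‖y‖ + ε := by
    rintro y ⟨w₀, rfl⟩ ε hε
    have h := lt_of_le_of_lt (ubc w₀) (lt_add_of_pos_right _ hε)
    obtain ⟨k, hk, hdk⟩ := (infDist_lt_iff hker_ne).1 h
    have hk0 : e n k = 0 := hk
    refine ⟨w₀ - k, ?_, ?_⟩
    · rw [map_sub, hk0, sub_zero]
    · rw [← dist_eq_norm]
      exact hdk.le
  -- Step 3: iterate to show that the set of boundaries is closed enough.
  have step : ∀ r : E n, r ∈ closure (Set.range (e n)) → ∀ ε : ℝ, 0 < ε →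
      ∃ u : E (n + 1), (r - e n u ∈ closure (Set.range (e n))) ∧ ‖r - e n u‖ < ε ∧
        ‖u‖ ≤ (K + 1) * (‖r‖ + ε) := by
    intro r hr ε hε
    obtain ⟨v, hv, hdist⟩ := Metric.mem_closure_iff.1 hr (ε / 2) (by positivity)
    obtain ⟨u, hu1, hu2⟩ := ubc' v hv (ε / 2) (by positivity)
    have hvn : ‖v‖ ≤ ‖r‖ + ε / 2 := by
      have h1 : ‖v‖ - ‖r‖ ≤ ‖v - r‖ := norm_sub_norm_le v r
      have h2 : ‖v - r‖ = dist r v := by rw [dist_eq_norm, norm_sub_rev]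
      linarith [hdist, h1, h2.le, h2.ge]
    refine ⟨u, ?_, ?_, ?_⟩
    · rw [hu1]
      have hcl : closure (Set.range (e n)) =
          (((LinearMap.range (e n : E (n + 1) →ₗ[ℝ] E n)).topologicalClosure : Submodule ℝ (E n)) : Set (E n)) := by
        rw [Submodule.topologicalClosure_coe, hrr]
      rw [hcl] at hr ⊢
      have hv' : v ∈ (LinearMap.range (e n : E (n + 1) →ₗ[ℝ] E n)).topologicalClosure :=
        Submodule.le_topologicalClosure _ (by rw [← hrr] at hv; exact hv)
      exact sub_mem hr hv'
    · rw [hu1, ← dist_eq_norm]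
      exact lt_of_lt_of_le hdist (by linarith)
    · calc ‖u‖ ≤ K * ‖v‖ + ε / 2 := hu2
        _ ≤ (K + 1) * (‖r‖ + ε) := by nlinarith [norm_nonneg r, hKpos]
  choose! F hF1 hF2 hF3 using step
  let rs : ℕ → E n := fun k => Nat.rec z (fun k rk => rk - e n (F rk ((1 / 2 : ℝ) ^ k))) k
  have hrsS : ∀ k, rs (k + 1) = rs k - e n (F (rs k) ((1 / 2 : ℝ) ^ k)) := fun k => rfl
  have hmem : ∀ k, rs k ∈ closure (Set.range (e n)) := by
    intro k
    induction k with
    | zero => exact hz_cl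
    | succ k ih =>
      rw [hrsS k]
      exact hF1 (rs k) ih _ (by positivity)
  have hlt : ∀ k, ‖rs (k + 1)‖ < (1 / 2 : ℝ) ^ k := by
    intro k
    rw [hrsS k]
    exact hF2 (rs k) (hmem k) _ (by positivity)
  set u : ℕ → E (n + 1) := fun k => F (rs k) ((1 / 2 : ℝ) ^ k) with hu
  have hub : ∀ k, ‖u k‖ ≤ (K + 1) * (‖rs k‖ + (1 / 2 : ℝ) ^ k) :=
    fun k => hF3 (rs k) (hmem k) _ (by positivity)
  have hnorm : ∀ k, ‖u k‖ ≤ ((K + 1) * (‖z‖ + 3)) * (1 / 2 : ℝ) ^ k := by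
    intro k
    cases k with
    | zero =>
      have h0 := hub 0
      have hz0 : rs 0 = z := rfl
      rw [hz0] at h0
      simp only [pow_zero, mul_one] at h0 ⊢
      nlinarith [norm_nonneg z, hKpos]
    | succ k =>
      have h1 := hub (k + 1)
      have h2 := hlt k
      have h3 : (0 : ℝ) < (1 / 2 : ℝ) ^ k := by positivity
      have h4 : ((1 / 2 : ℝ)) ^ (k + 1) = (1 / 2 : ℝ) ^ k * (1 / 2) := pow_succ _ _
      have hK1 : (0 : ℝ) ≤ K + 1 := by linarith
      have h3' : (0 : ℝ) ≤ (1 / 2 : ℝ) ^ (k + 1) := by positivity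
      have h6 : (0 : ℝ) ≤ (K + 1) * ‖z‖ * (1 / 2 : ℝ) ^ (k + 1) :=
        mul_nonneg (mul_nonneg hK1 (norm_nonneg z)) h3'
      calc ‖u (k + 1)‖ ≤ (K + 1) * (‖rs (k + 1)‖ + (1 / 2 : ℝ) ^ (k + 1)) := h1
        _ ≤ (K + 1) * ((1 / 2 : ℝ) ^ k + (1 / 2 : ℝ) ^ (k + 1)) :=
            mul_le_mul_of_nonneg_left (by linarith) hK1
        _ = (K + 1) * 3 * (1 / 2 : ℝ) ^ (k + 1) := by rw [h4]; ring
        _ ≤ (K + 1) * (‖z‖ + 3) * (1 / 2 : ℝ) ^ (k + 1) := by nlinarith [h6]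
  have hsummable : Summable u :=
    Summable.of_norm_bounded (summable_geometric_two.mul_left ((K + 1) * (‖z‖ + 3))) hnorm
  refine ⟨∑' k, u k, ?_⟩
  have h2 : HasSum (fun k => e n (u k)) (e n (∑' k, u k)) := hsummable.hasSum.mapL (e n)
  have hpart : ∀ N, ∑ i ∈ Finset.range N, e n (u i) = z - rs N := by
    intro N
    have hterm : ∀ i, e n (u i) = rs i - rs (i + 1) := by
      intro i
      rw [hrsS i]
      abel
    calc ∑ i ∈ Finset.range N, e n (u i) = ∑ i ∈ Finset.range N, (rs i - rs (i + 1)) :=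
          Finset.sum_congr rfl (fun i _ => hterm i)
      _ = rs 0 - rs N := Finset.sum_range_sub' rs N
      _ = z - rs N := rfl
  have hrs0 : Tendsto rs atTop (nhds 0) := by
    rw [← tendsto_add_atTop_iff_nat 1]
    have hbound : ∀ k, ‖rs (k + 1)‖ ≤ (1 / 2 : ℝ) ^ k := fun k => (hlt k).le
    exact squeeze_zero_norm hbound
      (tendsto_pow_atTop_nhds_zero_of_lt_one (by norm_num) (by norm_num))
  have h3 : Tendsto (fun N => ∑ i ∈ Finset.range N, e n (u i)) atTop (nhds z) := by
    simp only [hpart]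
    have : Tendsto (fun N => z - rs N) atTop (nhds (z - 0)) := tendsto_const_nhds.sub hrs0
    simpa using this
  exact tendsto_nhds_unique h2.tendsto_sum_nat h3

/-! ### The mapping cone of a morphism of Banach chain complexes -/

/-- Shifted complex: `Csh C 0 = PUnit`, `Csh C (n+1) = C n`. -/
@[reducible] def Csh (C : ℕ → Type u) : ℕ → Type u
  | 0 => PUnit
  | (n + 1) => C n

section cone

variable (C : ℕ → Type*) [∀ n, NormedAddCommGroup (C n)] [∀ n, NormedSpace ℝ (C n)]

instance instCshGroup : ∀ n, NormedAddCommGroup (Csh C n)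
  | 0 => inferInstanceAs (NormedAddCommGroup PUnit)
  | (n + 1) => inferInstanceAs (NormedAddCommGroup (C n))

noncomputable instance instCshSpace : ∀ n, NormedSpace ℝ (Csh C n)
  | 0 => inferInstanceAs (NormedSpace ℝ PUnit)
  | (n + 1) => inferInstanceAs (NormedSpace ℝ (C n))

instance instCshComplete [∀ n, CompleteSpace (C n)] : ∀ n, CompleteSpace (Csh C n)
  | 0 => show CompleteSpace PUnit from inferInstance
  | (n + 1) => inferInstanceAs (CompleteSpace (C n))

/-- The (negated, shifted) differential on `Csh C`. -/
noncomputable def cshD (dC : ∀ n, C (n + 1) →L[ℝ] C n) :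
    ∀ n, Csh C (n + 1) →L[ℝ] Csh C n
  | 0 => 0
  | (n + 1) => -(dC n)

variable (D : ℕ → Type*) [∀ n, NormedAddCommGroup (D n)] [∀ n, NormedSpace ℝ (D n)]
variable (dC : ∀ n, C (n + 1) →L[ℝ] C n) (dD : ∀ n, D (n + 1) →L[ℝ] D n)
variable (f : ∀ n, C n →L[ℝ] D n)

/-- The differential of the mapping cone of `f`. -/
noncomputable def coneD :
    ∀ n, (Csh C (n + 1) × D (n + 1)) →L[ℝ] (Csh C n × D n) := fun n =>
  ((cshD C dC n).comp (ContinuousLinearMap.fst ℝ (Csh C (n + 1)) (D (n + 1)))).prod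
    (((dD n).comp (ContinuousLinearMap.snd ℝ (Csh C (n + 1)) (D (n + 1)))) -
      ((f n).comp (ContinuousLinearMap.fst ℝ (Csh C (n + 1)) (D (n + 1)))))

lemma coneD_apply (n : ℕ) (p : Csh C (n + 1) × D (n + 1)) :
    coneD C D dC dD f n p = (cshD C dC n p.1, dD n p.2 - f n p.1) := rfl

lemma cone_sq (hC : ∀ n x, dC n (dC (n + 1) x) = 0) (hD : ∀ n x, dD n (dD (n + 1) x) = 0)
    (hf : ∀ n x, f n (dC n x) = dD n (f (n + 1) x)) :
    ∀ n x, coneD C D dC dD f n (coneD C D dC dD f (n + 1) x) = 0 := by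
  intro n x
  rw [coneD_apply, coneD_apply]
  have hsnd : dD n (dD (n + 1) x.2 - f (n + 1) x.1) - f n (cshD C dC (n + 1) x.1) = 0 := by
    have h1 : cshD C dC (n + 1) x.1 = -(dC n x.1) := rfl
    rw [h1, map_sub, map_neg, hD n x.2, hf n x.1]
    abel
  have hfst : cshD C dC n (cshD C dC (n + 1) x.1) = 0 := by
    cases n with
    | zero => rfl
    | succ m =>
      have h1 : cshD C dC (m + 1 + 1) x.1 = -(dC (m + 1) x.1) := rfl
      have h2 : ∀ y : C (m + 1), cshD C dC (m + 1) y = -(dC m y) := fun _ => rfl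
      rw [h1, h2, map_neg, hC m x.1, neg_neg]
  rw [hfst, hsnd]
  rfl

/-- Decomposition of a functional on a product. -/
lemma prod_clm_decomp {A B : Type*} [NormedAddCommGroup A] [NormedSpace ℝ A]
    [NormedAddCommGroup B] [NormedSpace ℝ B] (Φ : A × B →L[ℝ] ℝ) (p : A × B) :
    Φ p = Φ.comp (ContinuousLinearMap.inl ℝ A B) p.1 +
      Φ.comp (ContinuousLinearMap.inr ℝ A B) p.2 := by
  simp only [ContinuousLinearMap.comp_apply, ContinuousLinearMap.inl_apply,
    ContinuousLinearMap.inr_apply]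
  rw [← map_add]
  congr 1
  simp [Prod.ext_iff]

/-- Lifting coboundaries to the shifted complex. -/
lemma cobdry_lift {m : ℕ} {ρ : C m →L[ℝ] ℝ} (h : IsCobdry C dC m ρ) :
    ∃ γ : Csh C m →L[ℝ] ℝ, ∀ c : C m, γ (cshD C dC m c) = ρ c := by
  cases m with
  | zero =>
    refine ⟨0, fun c => ?_⟩
    rw [show ρ = 0 from h]
    rfl
  | succ k =>
    obtain ⟨a, ha⟩ := h
    refine ⟨-a, fun c => ?_⟩
    have h1 : cshD C dC (k + 1) c = -(dC k c) := by
      show (-(dC k)) c = -(dC k c)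
      simp
    rw [ha, h1]
    simp only [ContinuousLinearMap.neg_apply, map_neg, neg_neg, ContinuousLinearMap.comp_apply]

end cone

section coneVan

variable {C : ℕ → Type*} [∀ n, NormedAddCommGroup (C n)] [∀ n, NormedSpace ℝ (C n)]
variable {D : ℕ → Type*} [∀ n, NormedAddCommGroup (D n)] [∀ n, NormedSpace ℝ (D n)]
variable {dC : ∀ n, C (n + 1) →L[ℝ] C n} {dD : ∀ n, D (n + 1) →L[ℝ] D n}
variable {f : ∀ n, C n →L[ℝ] D n}

lemma coneVan (hf : ∀ n x, f n (dC n x) = dD n (f (n + 1) x))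
    (hinj : ∀ n, ∀ ψ : D n →L[ℝ] ℝ, ψ.comp (dD n) = 0 →
        IsCobdry C dC n (ψ.comp (f n)) → IsCobdry D dD n ψ)
    (hsurj : ∀ n, ∀ φ : C n →L[ℝ] ℝ, φ.comp (dC n) = 0 →
        ∃ ψ : D n →L[ℝ] ℝ, ψ.comp (dD n) = 0 ∧ IsCobdry C dC n (φ - ψ.comp (f n))) :
    ∀ n (Φ : (Csh C n × D n) →L[ℝ] ℝ), Φ.comp (coneD C D dC dD f n) = 0 →
      IsCobdry (fun k => Csh C k × D k) (coneD C D dC dD f) n Φ := by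
  intro n Φ hΦ
  set α := Φ.comp (ContinuousLinearMap.inl ℝ (Csh C n) (D n)) with hαdef
  set β := Φ.comp (ContinuousLinearMap.inr ℝ (Csh C n) (D n)) with hβdef
  have hdec : ∀ p : Csh C n × D n, Φ p = α p.1 + β p.2 := fun p => prod_clm_decomp Φ p
  have hpt : ∀ p : Csh C (n + 1) × D (n + 1),
      α (cshD C dC n p.1) + β (dD n p.2 - f n p.1) = 0 := by
    intro p
    have h0 : Φ (coneD C D dC dD f n p) = 0 := by
      have := ContinuousLinearMap.ext_iff.1 hΦ p
      simpa using this
    rw [coneD_apply] at h0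
    rw [← hdec ((cshD C dC n p.1, dD n p.2 - f n p.1) : Csh C n × D n)]
    exact h0
  have hβ : ∀ d0 : D (n + 1), β (dD n d0) = 0 := by
    intro d0
    have h := hpt (0, d0)
    simpa using h
  have hαβ : ∀ c : Csh C (n + 1), α (cshD C dC n c) = β (f n c) := by
    intro c
    have h := hpt (c, 0)
    simp only [map_zero, zero_sub, map_neg] at h
    linarith
  cases n with
  | zero =>
    have hA : ∀ x : Csh C 0, α x = 0 := by
      intro x
      have hx : x = 0 := Subsingleton.elim x 0
      rw [hx, map_zero]
    have hcob : IsCobdry C dC 0 (β.comp (f 0)) := by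
      show β.comp (f 0) = 0
      ext c
      have := hαβ c
      rw [hA _] at this
      simpa using this.symm
    have hβcoc : β.comp (dD 0) = 0 := by
      ext d0
      simpa using hβ d0
    have hβ0 : β = 0 := hinj 0 β hβcoc hcob
    show Φ = 0
    refine ContinuousLinearMap.ext fun p => ?_
    rw [hdec p, hβ0, hA p.1]
    simp
  | succ m =>
    -- here `α : C m →L[ℝ] ℝ`, `β : D (m+1) →L[ℝ] ℝ`
    have hβcoc : β.comp (dD (m + 1)) = 0 := by
      ext d0
      simpa using hβ d0
    have hcob : IsCobdry C dC (m + 1) (β.comp (f (m + 1))) := by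
      refine ⟨-α, ?_⟩
      ext c
      have h := (hαβ c).symm
      have h1 : cshD C dC (m + 1) c = -(dC m c) := by
        show (-(dC m)) c = -(dC m c)
        simp
      rw [h1, map_neg] at h
      show β (f (m + 1) c) = (-α) (dC m c)
      rw [h]
      simp
    obtain ⟨δ₀, hδ₀⟩ := hinj (m + 1) β hβcoc hcob
    have hδ₀' : ∀ y, β y = δ₀ (dD m y) := by
      intro y
      rw [hδ₀]
      rfl
    set φ : C m →L[ℝ] ℝ := α + δ₀.comp (f m) with hφdef
    have hφcoc : φ.comp (dC m) = 0 := by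
      ext c
      show φ (dC m c) = 0
      have h1 : φ (dC m c) = α (dC m c) + δ₀ (f m (dC m c)) := rfl
      have h2 : α (dC m c) = -β (f (m + 1) c) := by
        have h := hαβ c
        have h1' : cshD C dC (m + 1) c = -(dC m c) := by
          show (-(dC m)) c = -(dC m c)
          simp
        rw [h1', map_neg] at h
        linarith
      rw [h1, h2, hf m c, ← hδ₀' (f (m + 1) c)]
      simp
    obtain ⟨ψ, hψcoc, hψcob⟩ := hsurj m φ hφcoc
    have hψ' : ∀ y, ψ (dD m y) = 0 := by
      intro y
      have := ContinuousLinearMap.ext_iff.1 hψcoc y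
      simpa using this
    obtain ⟨γ, hγ⟩ := cobdry_lift C dC hψcob
    refine ⟨γ.comp (ContinuousLinearMap.fst ℝ (Csh C m) (D m)) +
      (δ₀ - ψ).comp (ContinuousLinearMap.snd ℝ (Csh C m) (D m)), ?_⟩
    refine ContinuousLinearMap.ext fun p => ?_
    have hL : Φ p = α p.1 + β p.2 := hdec p
    have hR : (γ.comp (ContinuousLinearMap.fst ℝ (Csh C m) (D m)) +
        (δ₀ - ψ).comp (ContinuousLinearMap.snd ℝ (Csh C m) (D m))).comp
          (coneD C D dC dD f m) p =
        γ (cshD C dC m p.1) + (δ₀ - ψ) (dD m p.2 - f m p.1) := rfl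
    rw [hL, hR, hγ p.1]
    have e1 : (φ - ψ.comp (f m)) p.1 = α p.1 + δ₀ (f m p.1) - ψ (f m p.1) := rfl
    have e2 : (δ₀ - ψ) (dD m p.2 - f m p.1) =
        δ₀ (dD m p.2) - δ₀ (f m p.1) - ψ (dD m p.2) + ψ (f m p.1) := by
      simp only [ContinuousLinearMap.sub_apply, map_sub]
      ring
    rw [e1, e2, hψ' p.2, ← hδ₀' p.2]
    ring

end coneVan

/-- Translation principle, part 2: if `H^*(f')` is an isometric
isomorphism in every degree, then `H_*(f)` is an isometric isomorphism in every
degree. -/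
theorem stmt6
    (C D : ℕ → Type*) [∀ n, NormedAddCommGroup (C n)] [∀ n, NormedAddCommGroup (D n)]
    [∀ n, NormedSpace ℝ (C n)] [∀ n, NormedSpace ℝ (D n)]
    [∀ n, CompleteSpace (C n)] [∀ n, CompleteSpace (D n)]
    (dC : ∀ n, C (n + 1) →L[ℝ] C n) (dD : ∀ n, D (n + 1) →L[ℝ] D n)
    (hC : ∀ n x, dC n (dC (n + 1) x) = 0) (hD : ∀ n x, dD n (dD (n + 1) x) = 0)
    (f : ∀ n, C n →L[ℝ] D n)
    (hf : ∀ n x, f n (dC n x) = dD n (f (n + 1) x))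
    -- `H^*(f')` is an isomorphism in every degree:
    (hinj : ∀ n, ∀ ψ : D n →L[ℝ] ℝ, ψ.comp (dD n) = 0 →
        IsCobdry C dC n (ψ.comp (f n)) → IsCobdry D dD n ψ)
    (hsurj : ∀ n, ∀ φ : C n →L[ℝ] ℝ, φ.comp (dC n) = 0 →
        ∃ ψ : D n →L[ℝ] ℝ, ψ.comp (dD n) = 0 ∧ IsCobdry C dC n (φ - ψ.comp (f n)))
    -- ... and it is isometric:
    (hiso : ∀ n, ∀ ψ : D n →L[ℝ] ℝ, ψ.comp (dD n) = 0 →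
        cSeminorm C dC n (ψ.comp (f n)) = cSeminorm D dD n ψ) :
    -- then `H_*(f)` is an isometric isomorphism in every degree:
    ((∀ n, ∀ x, IsCycle C dC n x → (∃ b, dD n b = f n x) → ∃ a, dC n a = x) ∧
     (∀ n, ∀ y, IsCycle D dD n y → ∃ x, IsCycle C dC n x ∧ ∃ b, y - f n x = dD n b)) ∧
    (∀ n, ∀ x, IsCycle C dC n x →
      hSeminorm D dD n (f n x) = hSeminorm C dC n x) := by
  classical
  have key := lemA (fun k => Csh C k × D k) (coneD C D dC dD f)
    (cone_sq C D dC dD f hC hD hf) (coneVan hf hinj hsurj)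
  refine ⟨⟨?_, ?_⟩, ?_⟩
  · -- injectivity of `H_*(f)`
    intro n x hx hb
    obtain ⟨b, hb⟩ := hb
    have hz : IsCycle (fun k => Csh C k × D k) (coneD C D dC dD f) (n + 1)
        ((x, b) : Csh C (n + 1) × D (n + 1)) := by
      show coneD C D dC dD f n (x, b) = 0
      rw [coneD_apply]
      refine Prod.ext_iff.2 ⟨?_, ?_⟩
      · cases n with
        | zero => exact Subsingleton.elim _ _
        | succ m =>
          have hx' : dC m x = 0 := hx
          show (-(dC m)) x = 0
          simp [hx']
      · show dD n b - f n x = 0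
        rw [hb, sub_self]
    obtain ⟨w, hw⟩ := key (n + 1) (x, b) hz
    refine ⟨-w.1, ?_⟩
    have h1 : -(dC n w.1) = x := by
      have := congrArg Prod.fst hw
      rw [coneD_apply] at this
      exact this
    rw [map_neg]
    exact h1
  · -- surjectivity of `H_*(f)`
    intro n y hy
    have hz : IsCycle (fun k => Csh C k × D k) (coneD C D dC dD f) n
        ((0, y) : Csh C n × D n) := by
      cases n with
      | zero => trivial
      | succ m =>
        show coneD C D dC dD f m (0, y) = 0
        rw [coneD_apply]
        have hy' : dD m y = 0 := hy
        refine Prod.ext_iff.2 ⟨?_, ?_⟩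
        · show cshD C dC m 0 = 0
          exact map_zero _
        · show dD m y - f m 0 = 0
          rw [hy', map_zero, sub_zero]
    obtain ⟨w, hw⟩ := key n (0, y) hz
    have h1 : cshD C dC n w.1 = 0 := by
      have := congrArg Prod.fst hw
      rw [coneD_apply] at this
      exact this
    have h2 : dD n w.2 - f n w.1 = y := by
      have := congrArg Prod.snd hw
      rw [coneD_apply] at this
      exact this
    refine ⟨-w.1, ?_, w.2, ?_⟩
    · cases n with
      | zero => trivial
      | succ m =>
        show dC m (-w.1) = 0
        have h1' : -(dC m w.1) = 0 := h1
        rw [map_neg, h1']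
    · rw [map_neg, sub_neg_eq_add, ← h2]
      abel
  · -- the isometry statement
    intro n x hx
    have hfx : IsCycle D dD n (f n x) := by
      cases n with
      | zero => trivial
      | succ m =>
        show dD m (f (m + 1) x) = 0
        have hx' : dC m x = 0 := hx
        rw [← hf m x, hx', map_zero]
    have hrC : ((LinearMap.range (dC n : C (n + 1) →ₗ[ℝ] C n) : Submodule ℝ (C n)) : Set (C n)) =
        Set.range (dC n) := by
      ext w; simp [LinearMap.mem_range]
    have hrD : ((LinearMap.range (dD n : D (n + 1) →ₗ[ℝ] D n) : Submodule ℝ (D n)) : Set (D n)) =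
        Set.range (dD n) := by
      ext w; simp [LinearMap.mem_range]
    have hCne : (Set.range (dC n)).Nonempty := ⟨dC n 0, 0, rfl⟩
    have hDne : (Set.range (dD n)).Nonempty := ⟨dD n 0, 0, rfl⟩
    rw [hSeminorm_eq, hSeminorm_eq]
    apply le_antisymm
    · -- `‖[f x]‖ ≤ ‖[x]‖`
      have main : ∀ ε : ℝ, 0 < ε →
          infDist (f n x) (Set.range (dD n)) ≤ (1 + ε) * infDist x (Set.range (dC n)) := by
        intro ε hε
        obtain ⟨ψ, hψ1, hψ2, hψ3⟩ := exists_functional (LinearMap.range (dD n : D (n + 1) →ₗ[ℝ] D n)) (f n x)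
        have hψco : ψ.comp (dD n) = 0 := by
          ext w
          simp only [ContinuousLinearMap.comp_apply, ContinuousLinearMap.zero_apply]
          exact hψ2 _ (LinearMap.mem_range_self _ w)
        have hc2 : cSeminorm C dC n (ψ.comp (f n)) ≤ 1 := by
          rw [hiso n ψ hψco]
          exact le_trans (cSeminorm_le_norm ψ) hψ1
        obtain ⟨g, hg, hgn⟩ := exists_cobdry_rep hc2 hε
        have hgc := cobdry_cocycle hC hg
        have hcoc : (ψ.comp (f n) - g).comp (dC n) = 0 := by
          ext w
          simp only [ContinuousLinearMap.comp_apply, ContinuousLinearMap.sub_apply,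
            ContinuousLinearMap.zero_apply]
          have e1 : ψ (dD n (f (n + 1) w)) = 0 := hψ2 _ (LinearMap.mem_range_self _ _)
          have e2 : g (dC n w) = 0 := by
            have := ContinuousLinearMap.ext_iff.1 hgc w
            simpa using this
          rw [hf n w, e1, e2, sub_zero]
        have hg0 : g x = 0 := cobdry_apply_cycle hg hx
        have hval : (ψ.comp (f n) - g) x = infDist (f n x) (Set.range (dD n)) := by
          have h1 : (ψ.comp (f n) - g) x = ψ (f n x) - g x := rfl
          rw [h1, hg0, sub_zero, hψ3, hrD]
        have hbd : ∀ y ∈ Set.range (dC n),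
            infDist (f n x) (Set.range (dD n)) / (1 + ε) ≤ dist x y := by
          rintro y ⟨b, rfl⟩
          have h6 : (ψ.comp (f n) - g) (dC n b) = 0 := by
            have := ContinuousLinearMap.ext_iff.1 hcoc b
            simpa using this
          have h5 : (ψ.comp (f n) - g) x = (ψ.comp (f n) - g) (x - dC n b) := by
            rw [map_sub, h6, sub_zero]
          have h7 : (ψ.comp (f n) - g) (x - dC n b) ≤ (1 + ε) * ‖x - dC n b‖ := by
            calc (ψ.comp (f n) - g) (x - dC n b)
                ≤ ‖(ψ.comp (f n) - g) (x - dC n b)‖ := by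
                  rw [Real.norm_eq_abs]; exact le_abs_self _
              _ ≤ ‖ψ.comp (f n) - g‖ * ‖x - dC n b‖ := ContinuousLinearMap.le_opNorm _ _
              _ ≤ (1 + ε) * ‖x - dC n b‖ :=
                  mul_le_mul_of_nonneg_right hgn.le (norm_nonneg _)
          rw [div_le_iff₀ (by linarith : (0:ℝ) < 1 + ε), dist_eq_norm]
          calc infDist (f n x) (Set.range (dD n)) = (ψ.comp (f n) - g) x := hval.symm
            _ = (ψ.comp (f n) - g) (x - dC n b) := h5
            _ ≤ (1 + ε) * ‖x - dC n b‖ := h7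
            _ = ‖x - dC n b‖ * (1 + ε) := mul_comm _ _
        have h8 := le_infDist' hCne hbd
        rw [div_le_iff₀ (by linarith : (0:ℝ) < 1 + ε)] at h8
        calc infDist (f n x) (Set.range (dD n))
            ≤ infDist x (Set.range (dC n)) * (1 + ε) := h8
          _ = (1 + ε) * infDist x (Set.range (dC n)) := mul_comm _ _
      refine _root_.le_of_forall_pos_le_add (fun ε' hε' => ?_)
      have hB : (0:ℝ) ≤ infDist x (Set.range (dC n)) := infDist_nonneg
      have hm := main (ε' / (infDist x (Set.range (dC n)) + 1)) (by positivity)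
      have hkey : (ε' / (infDist x (Set.range (dC n)) + 1)) *
          infDist x (Set.range (dC n)) ≤ ε' := by
        rw [div_mul_eq_mul_div, div_le_iff₀ (by linarith)]
        nlinarith
      nlinarith [hm, hkey]
    · -- `‖[x]‖ ≤ ‖[f x]‖`
      have main : ∀ ε : ℝ, 0 < ε →
          infDist x (Set.range (dC n)) ≤ (1 + ε) * infDist (f n x) (Set.range (dD n)) := by
        intro ε hε
        obtain ⟨φ, hφ1, hφ2, hφ3⟩ := exists_functional (LinearMap.range (dC n : C (n + 1) →ₗ[ℝ] C n)) x
        have hφco : φ.comp (dC n) = 0 := by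
          ext w
          simp only [ContinuousLinearMap.comp_apply, ContinuousLinearMap.zero_apply]
          exact hφ2 _ (LinearMap.mem_range_self _ w)
        obtain ⟨ψ, hψco, hψcob⟩ := hsurj n φ hφco
        have hcψf : cSeminorm C dC n (ψ.comp (f n)) ≤ 1 := by
          have hrwr : ψ.comp (f n) = φ - (φ - ψ.comp (f n)) := by abel
          rw [hrwr, cSeminorm_sub_cobdry hψcob]
          exact le_trans (cSeminorm_le_norm φ) hφ1
        have hcD : cSeminorm D dD n ψ ≤ 1 := by
          rw [← hiso n ψ hψco]
          exact hcψf
        obtain ⟨g, hg, hgn⟩ := exists_cobdry_rep hcD hε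
        have hgc := cobdry_cocycle hD hg
        have hcoc : (ψ - g).comp (dD n) = 0 := by
          ext w
          simp only [ContinuousLinearMap.comp_apply, ContinuousLinearMap.sub_apply,
            ContinuousLinearMap.zero_apply]
          have e1 : ψ (dD n w) = 0 := by
            have := ContinuousLinearMap.ext_iff.1 hψco w
            simpa using this
          have e2 : g (dD n w) = 0 := by
            have := ContinuousLinearMap.ext_iff.1 hgc w
            simpa using this
          rw [e1, e2, sub_zero]
        have hc0x : (φ - ψ.comp (f n)) x = 0 := cobdry_apply_cycle hψcob hx
        have hgfx : g (f n x) = 0 := cobdry_apply_cycle hg hfx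
        have hval : (ψ - g) (f n x) = infDist x (Set.range (dC n)) := by
          have h1 : (ψ - g) (f n x) = ψ (f n x) - g (f n x) := rfl
          have h2 : ψ (f n x) = φ x := by
            have h3 : (φ - ψ.comp (f n)) x = φ x - ψ (f n x) := rfl
            rw [h3] at hc0x
            linarith
          rw [h1, hgfx, sub_zero, h2, hφ3, hrC]
        have hbd : ∀ y ∈ Set.range (dD n),
            infDist x (Set.range (dC n)) / (1 + ε) ≤ dist (f n x) y := by
          rintro y ⟨b, rfl⟩
          have h6 : (ψ - g) (dD n b) = 0 := by
            have := ContinuousLinearMap.ext_iff.1 hcoc b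
            simpa using this
          have h5 : (ψ - g) (f n x) = (ψ - g) (f n x - dD n b) := by
            rw [map_sub, h6, sub_zero]
          have h7 : (ψ - g) (f n x - dD n b) ≤ (1 + ε) * ‖f n x - dD n b‖ := by
            calc (ψ - g) (f n x - dD n b)
                ≤ ‖(ψ - g) (f n x - dD n b)‖ := by
                  rw [Real.norm_eq_abs]; exact le_abs_self _
              _ ≤ ‖ψ - g‖ * ‖f n x - dD n b‖ := ContinuousLinearMap.le_opNorm _ _
              _ ≤ (1 + ε) * ‖f n x - dD n b‖ :=
                  mul_le_mul_of_nonneg_right hgn.le (norm_nonneg _)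
          rw [div_le_iff₀ (by linarith : (0:ℝ) < 1 + ε), dist_eq_norm]
          calc infDist x (Set.range (dC n)) = (ψ - g) (f n x) := hval.symm
            _ = (ψ - g) (f n x - dD n b) := h5
            _ ≤ (1 + ε) * ‖f n x - dD n b‖ := h7
            _ = ‖f n x - dD n b‖ * (1 + ε) := mul_comm _ _
        have h8 := le_infDist' hDne hbd
        rw [div_le_iff₀ (by linarith : (0:ℝ) < 1 + ε)] at h8
        calc infDist x (Set.range (dC n))
            ≤ infDist (f n x) (Set.range (dD n)) * (1 + ε) := h8
          _ = (1 + ε) * infDist (f n x) (Set.range (dD n)) := mul_comm _ _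
      refine _root_.le_of_forall_pos_le_add (fun ε' hε' => ?_)
      have hB : (0:ℝ) ≤ infDist (f n x) (Set.range (dD n)) := infDist_nonneg
      have hm := main (ε' / (infDist (f n x) (Set.range (dD n)) + 1)) (by positivity)
      have hkey : (ε' / (infDist (f n x) (Set.range (dD n)) + 1)) *
          infDist (f n x) (Set.range (dD n)) ≤ ε' := by
        rw [div_mul_eq_mul_div, div_le_iff₀ (by linarith)]
        nlinarith
      nlinarith [hm, hkey]
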